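/- Let X be a real normed vector space and let 𝒯 be a second topology on X such that whenever a sequence (z_n) converges to 0 in 𝒯 and y ∈ X, the sequence (y + z_n) converges to y in 𝒯. Let (τ_a)_{a∈ℝ} be a one-parameter group of linear isometries of X (i.e. each τ_a : X → X is linear with ‖τ_a x‖ = ‖x‖ for all x, τ_0 = id, and τ_{a+b} = τ_a ∘ τ_b for all a,b ∈ ℝ). Suppose Z ⊆ X satisfies: (1) Z is sequentially 𝒯-closed (if z_n ∈ Z for all n and z_n → z in 𝒯, then z ∈ Z); (2) τ_a(Z) ⊆ Z for every a ∈ ℝ; (3) Z contains a closed ball {y ∈ X : ‖y − x‖ ≤ r} for some x ∈ X and r > 0; (4) for every sequence a_n → ∞ one has τ_{a_n} x → 0 in 𝒯. Then Z contains the closed ball {y ∈ X : ‖y‖ ≤ r} centred at the origin. -/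
import Mathlib


open Filter

/-- Lemma of Guerra–Koch–Lindberg: a sequentially `𝒯`-closed, translation-invariant set
containing a closed ball `B̄(x,r)` such that `τ_a x → 𝒯-converges` to `0` as `a → ∞`
also contains the closed ball `B̄(0,r)`. -/
theorem stmt_0 {X : Type*} [NormedAddCommGroup X] [NormedSpace ℝ X]
    (𝒯 : TopologicalSpace X)
    (h𝒯 : ∀ (z : ℕ → X) (y : X),
      Tendsto z atTop (@nhds X 𝒯 0) → Tendsto (fun n => y + z n) atTop (@nhds X 𝒯 y))
    (τ : ℝ → X →ₗ[ℝ] X)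
    (hiso : ∀ (a : ℝ) (x : X), ‖τ a x‖ = ‖x‖)
    (hid : τ 0 = LinearMap.id)
    (hgrp : ∀ a b : ℝ, τ (a + b) = (τ a).comp (τ b))
    (Z : Set X)
    (hclosed : ∀ (z : ℕ → X) (l : X), (∀ n, z n ∈ Z) →
      Tendsto z atTop (@nhds X 𝒯 l) → l ∈ Z)
    (hinv : ∀ a : ℝ, (τ a) '' Z ⊆ Z)
    (x : X) (r : ℝ) (hr : 0 < r)
    (hball : {y : X | ‖y - x‖ ≤ r} ⊆ Z)
    (hlim : ∀ a : ℕ → ℝ, Tendsto a atTop atTop →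
      Tendsto (fun n => τ (a n) x) atTop (@nhds X 𝒯 0)) :
    {y : X | ‖y‖ ≤ r} ⊆ Z := by
  intro y hy
  have hinvcomp : ∀ a : ℝ, ∀ v : X, τ a (τ (-a) v) = v := by
    intro a v
    have : τ (a + (-a)) v = τ a (τ (-a) v) := by rw [hgrp]; rfl
    rw [add_neg_cancel, hid] at this
    simpa using this.symm
  have hmem : ∀ n : ℕ, y + τ (n : ℝ) x ∈ Z := by
    intro n
    have h1 : τ (-(n : ℝ)) y + x ∈ Z := by
      apply hball
      simpa [hiso] using hy
    have h2 : τ (n : ℝ) (τ (-(n : ℝ)) y + x) ∈ Z := hinv _ ⟨_, h1, rfl⟩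
    have h3 : τ (n : ℝ) (τ (-(n : ℝ)) y + x) = y + τ (n : ℝ) x := by
      rw [map_add, hinvcomp]
    rwa [h3] at h2
  have hlim' : Tendsto (fun n : ℕ => τ (n : ℝ) x) atTop (@nhds X 𝒯 0) :=
    hlim _ tendsto_natCast_atTop_atTop
  exact hclosed _ y hmem (h𝒯 _ y hlim')
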